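/- arXiv:1702.07629 — 2 statements merged into one kernel-verified Lean document; each statement's English description precedes it below -/
import Mathlib

section
/- Let A be a unital complex Banach algebra, M a unital A-bimodule, n ≥ 2, and let Δ be a 2-local derivation from M_n(A) into M_n(M) that vanishes on the linear span of the matrix units {e_{ij}}_{i,j=1}^n. If x ∈ A_{ii} = e_{ii} M_n(A) e_{ii}, then for every j with 1 ≤ j ≤ n one has e_{ji} Δ(x) e_{ij} = Δ(e_{ji} x e_{ij}). -/
set_option linter.unusedSectionVars false
set_option linter.unnecessarySimpa false
set_option linter.unusedVariables false


open MulOpposite Matrix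

variable (A M : Type*) [NormedRing A] [NormedAlgebra ℂ A] [CompleteSpace A]
  [AddCommGroup M] [Module ℂ M] [Module A M] [Module Aᵐᵒᵖ M]
  [SMulCommClass A Aᵐᵒᵖ M] [IsScalarTower ℂ A M] [IsScalarTower ℂ Aᵐᵒᵖ M]

/-- `D : A → M` is a derivation from the Banach algebra `A` into the unital
`A`-bimodule `M`: a `ℂ`-linear map with the Leibniz rule (the right action of
`A` on `M` is written via `Aᵐᵒᵖ`). -/
def IsDerivation (D : A → M) : Prop :=
  IsLinearMap ℂ D ∧ ∀ x y : A, D (x * y) = op y • D x + x • D y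

variable {n : ℕ}

/-- The left action of `Mₙ(A)` on `Mₙ(M)`: `(x · Y)_{ij} = Σ_k x_{ik} · Y_{kj}`. -/
def matL (x : Matrix (Fin n) (Fin n) A) (Y : Matrix (Fin n) (Fin n) M) :
    Matrix (Fin n) (Fin n) M :=
  Matrix.of fun i j => ∑ k, x i k • Y k j

/-- The right action of `Mₙ(A)` on `Mₙ(M)`: `(Y · x)_{ij} = Σ_k Y_{ik} · x_{kj}`. -/
def matR (Y : Matrix (Fin n) (Fin n) M) (x : Matrix (Fin n) (Fin n) A) :
    Matrix (Fin n) (Fin n) M :=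
  Matrix.of fun i j => ∑ k, op (x k j) • Y i k

/-- A derivation from `Mₙ(A)` into the `Mₙ(A)`-bimodule `Mₙ(M)`. -/
def IsMatDerivation (D : Matrix (Fin n) (Fin n) A → Matrix (Fin n) (Fin n) M) : Prop :=
  IsLinearMap ℂ D ∧
    ∀ x y : Matrix (Fin n) (Fin n) A, D (x * y) = matR A M (D x) y + matL A M x (D y)

/-- A 2-local derivation from `Mₙ(A)` into `Mₙ(M)`: for each pair of points there
is a derivation agreeing with `Δ` at both of them. -/
def Is2LocalMatDerivation (Δ : Matrix (Fin n) (Fin n) A → Matrix (Fin n) (Fin n) M) : Prop :=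
  ∀ x y : Matrix (Fin n) (Fin n) A,
    ∃ D : Matrix (Fin n) (Fin n) A → Matrix (Fin n) (Fin n) M,
      IsMatDerivation A M D ∧ Δ x = D x ∧ Δ y = D y

/-- The matrix unit `e_{ij}`: the unit of `A` at position `(i,j)`, zeros elsewhere. -/
def matUnit (i j : Fin n) : Matrix (Fin n) (Fin n) A :=
  Matrix.single i j 1

/-- The linear span of the matrix units `{e_{ij}}`. -/
noncomputable def unitSpan (n : ℕ) : Submodule ℂ (Matrix (Fin n) (Fin n) A) :=
  Submodule.span ℂ (Set.range fun p : Fin n × Fin n => Matrix.single p.1 p.2 (1 : A))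

/-- The set `Dₙ(A)` of diagonal matrices in `Mₙ(A)`. -/
def diagSet (n : ℕ) : Set (Matrix (Fin n) (Fin n) A) :=
  {x | ∀ i j : Fin n, i ≠ j → x i j = 0}

-- helpers (already tested)
lemma matL_mul (a b : Matrix (Fin n) (Fin n) A) (Y : Matrix (Fin n) (Fin n) M) :
    matL A M (a * b) Y = matL A M a (matL A M b Y) := by
  ext p q
  simp only [matL, Matrix.of_apply, Matrix.mul_apply, Finset.sum_smul, Finset.smul_sum,
    mul_smul]
  exact Finset.sum_comm

lemma matR_mul (a b : Matrix (Fin n) (Fin n) A) (Y : Matrix (Fin n) (Fin n) M) :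
    matR A M Y (a * b) = matR A M (matR A M Y a) b := by
  ext p q
  have hop : ∀ (f : Fin n → A), op (∑ l, f l) = ∑ l, op (f l) := fun f => by
    simpa using map_sum (MulOpposite.opAddEquiv (α := A)) f Finset.univ
  simp only [matR, Matrix.of_apply, Matrix.mul_apply, hop, Finset.sum_smul, Finset.smul_sum,
    op_mul, mul_smul]
  exact Finset.sum_comm

lemma matL_matR (a b : Matrix (Fin n) (Fin n) A) (Y : Matrix (Fin n) (Fin n) M) :
    matL A M a (matR A M Y b) = matR A M (matL A M a Y) b := by
  ext p q
  simp only [matL, matR, Matrix.of_apply, Finset.smul_sum]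
  rw [Finset.sum_comm]
  congr 1; ext k; congr 1; ext l
  exact smul_comm _ _ _

lemma matL_zero_left (Y : Matrix (Fin n) (Fin n) M) : matL A M 0 Y = 0 := by
  ext p q; simp [matL]

lemma matL_zero_right (a : Matrix (Fin n) (Fin n) A) :
    matL A M a (0 : Matrix (Fin n) (Fin n) M) = 0 := by
  ext p q; simp [matL]

lemma matR_zero_left (a : Matrix (Fin n) (Fin n) A) :
    matR A M (0 : Matrix (Fin n) (Fin n) M) a = 0 := by
  ext p q; simp [matR]

lemma matR_zero_right (Y : Matrix (Fin n) (Fin n) M) : matR A M Y 0 = 0 := by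
  ext p q; simp [matR]

lemma matL_add (a : Matrix (Fin n) (Fin n) A) (Y Z : Matrix (Fin n) (Fin n) M) :
    matL A M a (Y + Z) = matL A M a Y + matL A M a Z := by
  ext p q; simp [matL, smul_add, Finset.sum_add_distrib]

lemma matR_add (Y Z : Matrix (Fin n) (Fin n) M) (a : Matrix (Fin n) (Fin n) A) :
    matR A M (Y + Z) a = matR A M Y a + matR A M Z a := by
  ext p q; simp [matR, smul_add, Finset.sum_add_distrib]

lemma matL_sub (a : Matrix (Fin n) (Fin n) A) (Y Z : Matrix (Fin n) (Fin n) M) :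
    matL A M a (Y - Z) = matL A M a Y - matL A M a Z := by
  ext p q; simp [matL, smul_sub, Finset.sum_sub_distrib]

lemma matR_sub (Y Z : Matrix (Fin n) (Fin n) M) (a : Matrix (Fin n) (Fin n) A) :
    matR A M (Y - Z) a = matR A M Y a - matR A M Z a := by
  ext p q; simp [matR, smul_sub, Finset.sum_sub_distrib]

/-- If `Δ` is a 2-local derivation vanishing on the unit span and `z = v z v` with
`v` in the unit span, then `Δ z = v Δ(z) v`. -/
lemma conj_fix (Δ : Matrix (Fin n) (Fin n) A → Matrix (Fin n) (Fin n) M)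
    (hΔ : Is2LocalMatDerivation A M Δ) (hvan : ∀ t ∈ unitSpan A n, Δ t = 0)
    (v : Matrix (Fin n) (Fin n) A) (hv : v ∈ unitSpan A n)
    (z : Matrix (Fin n) (Fin n) A) (hz : z = v * z * v) :
    matL A M v (matR A M (Δ z) v) = Δ z := by
  obtain ⟨D, hD, h1, h2⟩ := hΔ z v
  have hDv : D v = 0 := by rw [← h2, hvan v hv]
  have : D z = matL A M v (matR A M (D z) v) := by
    conv_lhs => rw [hz, mul_assoc, hD.2, hD.2]
    rw [hDv, matR_zero_left, matL_zero_right, add_zero, zero_add]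
  rw [h1]; exact this.symm

/-- Product of matrix units. -/
lemma matUnit_mul (i j k l : Fin n) :
    matUnit A i j * matUnit A k l = if j = k then matUnit A i l else 0 := by
  by_cases h : j = k
  · subst h; simp [matUnit]
  · simp [matUnit, Matrix.single_mul_single_of_ne (h := h), h]

/-- For any derivation `D`, if `z = e_ll z e_ll` and `k ≠ l` then `e_kk D(z) e_kk = 0`. -/
lemma corner_vanish (D : Matrix (Fin n) (Fin n) A → Matrix (Fin n) (Fin n) M)
    (hD : IsMatDerivation A M D) (k l : Fin n) (hkl : k ≠ l)
    (z : Matrix (Fin n) (Fin n) A) (hz : z = matUnit A l l * z * matUnit A l l) :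
    matL A M (matUnit A k k) (matR A M (D z) (matUnit A k k)) = 0 := by
  have hlk : matUnit A l l * matUnit A k k = 0 := by
    rw [matUnit_mul, if_neg (Ne.symm hkl)]
  have hkl0 : matUnit A k k * matUnit A l l = 0 := by
    rw [matUnit_mul, if_neg hkl]
  have hDz : D z = matR A M (D (matUnit A l l)) (z * matUnit A l l) +
      matL A M (matUnit A l l)
        (matR A M (D z) (matUnit A l l) + matL A M z (D (matUnit A l l))) := by
    conv_lhs => rw [hz, mul_assoc, hD.2, hD.2]
  rw [hDz, matR_add, matL_add, ← matR_mul, mul_assoc, hlk, mul_zero, matR_zero_right,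
    matL_zero_right, matL_matR, ← matL_mul, hkl0, matL_zero_left, matR_zero_left, add_zero]

lemma matUnit_mul_left (i j k l : Fin n) (X : Matrix (Fin n) (Fin n) A) :
    matUnit A i j * (matUnit A k l * X) = if j = k then matUnit A i l * X else 0 := by
  rw [← mul_assoc, matUnit_mul]
  split <;> simp


/-- if a 2-local derivation `Δ : Mₙ(A) → Mₙ(M)` (`n ≥ 2`) vanishes on the
span of the matrix units and `x ∈ A_{ii} = e_{ii} Mₙ(A) e_{ii}`, then
`e_{ji} · Δ x · e_{ij} = Δ (e_{ji} x e_{ij})` for every `j`. -/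
theorem twoLocal_conjugate_corner (n : ℕ) (hn : 2 ≤ n)
    (Δ : Matrix (Fin n) (Fin n) A → Matrix (Fin n) (Fin n) M)
    (hΔ : Is2LocalMatDerivation A M Δ)
    (hvan : ∀ t ∈ unitSpan A n, Δ t = 0)
    (i : Fin n) (x : Matrix (Fin n) (Fin n) A)
    (hx : x = matUnit A i i * x * matUnit A i i) :
    ∀ j : Fin n,
      matL A M (matUnit A j i) (matR A M (Δ x) (matUnit A i j)) =
        Δ (matUnit A j i * x * matUnit A i j) := by
  have memunit : ∀ k l : Fin n, matUnit A k l ∈ unitSpan A n := fun k l =>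
    Submodule.subset_span ⟨(k, l), rfl⟩
  intro j
  by_cases hj : j = i
  · subst hj
    rw [← hx]
    exact conj_fix A M Δ hΔ hvan _ (memunit _ _) x hx
  · have hji : j ≠ i := hj
    have hij : i ≠ j := Ne.symm hj
    -- basic products
    have hfix : matUnit A i i * (x * matUnit A i i) = x := by rw [← mul_assoc, ← hx]
    have hpx : matUnit A i j * x = 0 := by
      conv_lhs => rw [hx]
      simp [mul_assoc, matUnit_mul, matUnit_mul_left, hji, hij]
    have hpx' : ∀ z, matUnit A i j * (x * z) = 0 := fun z => by
      rw [← mul_assoc, hpx, zero_mul]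
    have hxq : x * matUnit A j i = 0 := by
      conv_lhs => rw [hx]
      simp [mul_assoc, matUnit_mul, matUnit_mul_left, hji, hij]
    have hy : matUnit A j i * x * matUnit A i j =
        matUnit A j j * (matUnit A j i * x * matUnit A i j) * matUnit A j j := by
      have h : matUnit A j j * (matUnit A j i * x * matUnit A i j) * matUnit A j j =
          matUnit A j i * x * matUnit A i j := by
        simp [mul_assoc, matUnit_mul, matUnit_mul_left, hji, hij]
      exact h.symm
    have hww : x + matUnit A j i * x * matUnit A i j =
        (matUnit A i j + matUnit A j i) * (x + matUnit A j i * x * matUnit A i j) *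
          (matUnit A i j + matUnit A j i) := by
      have h : (matUnit A i j + matUnit A j i) *
          (x + matUnit A j i * x * matUnit A i j) * (matUnit A i j + matUnit A j i) =
          x + matUnit A j i * x * matUnit A i j := by
        simp [add_mul, mul_add, mul_assoc, matUnit_mul, matUnit_mul_left, hpx', hxq,
          hfix, hji, hij]
        abel
      exact h.symm
    have memu : matUnit A i j + matUnit A j i ∈ unitSpan A n :=
      add_mem (memunit i j) (memunit j i)
    -- conjugation-fixed points
    have S1 := conj_fix A M Δ hΔ hvan (matUnit A i i) (memunit _ _) x hx
    have S2 := conj_fix A M Δ hΔ hvan (matUnit A j j) (memunit j j)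
      (matUnit A j i * x * matUnit A i j) hy
    have S3 := conj_fix A M Δ hΔ hvan (matUnit A i j + matUnit A j i) memu
      (x + matUnit A j i * x * matUnit A i j) hww
    -- S4 : e_ii-corner of Δ(w) is Δ x
    have S4 : matL A M (matUnit A i i)
        (matR A M (Δ (x + matUnit A j i * x * matUnit A i j)) (matUnit A i i)) = Δ x := by
      obtain ⟨D, hD, hw1, hx1⟩ := hΔ (x + matUnit A j i * x * matUnit A i j) x
      have hDy : D (matUnit A j i * x * matUnit A i j) =
          D (x + matUnit A j i * x * matUnit A i j) - D x := by
        have h := (IsLinearMap.mk' D hD.1).map_sub (x + matUnit A j i * x * matUnit A i j) x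
        simpa [add_sub_cancel_left] using h
      have hcv := corner_vanish A M D hD i j hij (matUnit A j i * x * matUnit A i j) hy
      have h0 : matL A M (matUnit A i i)
          (matR A M (Δ (x + matUnit A j i * x * matUnit A i j)) (matUnit A i i)) -
          matL A M (matUnit A i i) (matR A M (Δ x) (matUnit A i i)) = 0 := by
        rw [hw1, hx1, ← matL_sub, ← matR_sub, ← hDy, hcv]
      exact (sub_eq_zero.mp h0).trans S1
    -- S5 : e_jj-corner of Δ(w) is Δ y
    have S5 : matL A M (matUnit A j j)
        (matR A M (Δ (x + matUnit A j i * x * matUnit A i j)) (matUnit A j j)) =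
        Δ (matUnit A j i * x * matUnit A i j) := by
      obtain ⟨D, hD, hw1, hy1⟩ := hΔ (x + matUnit A j i * x * matUnit A i j)
        (matUnit A j i * x * matUnit A i j)
      have hDx : D x = D (x + matUnit A j i * x * matUnit A i j) -
          D (matUnit A j i * x * matUnit A i j) := by
        have h := (IsLinearMap.mk' D hD.1).map_sub
          (x + matUnit A j i * x * matUnit A i j) (matUnit A j i * x * matUnit A i j)
        simpa [add_sub_cancel_right] using h
      have hcv := corner_vanish A M D hD j i hji x hx
      have h0 : matL A M (matUnit A j j)
          (matR A M (Δ (x + matUnit A j i * x * matUnit A i j)) (matUnit A j j)) -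
          matL A M (matUnit A j j)
            (matR A M (Δ (matUnit A j i * x * matUnit A i j)) (matUnit A j j)) = 0 := by
        rw [hw1, hy1, ← matL_sub, ← matR_sub, ← hDx, hcv]
      exact (sub_eq_zero.mp h0).trans S2
    -- collapse lemma
    have collapse : ∀ (a b c d : Matrix (Fin n) (Fin n) A) (Z : Matrix (Fin n) (Fin n) M),
        matL A M a (matR A M (matL A M b (matR A M Z c)) d) =
          matL A M (a * b) (matR A M Z (c * d)) := by
      intro a b c d Z
      rw [matL_matR, ← matL_mul, matL_matR, ← matR_mul, ← matL_matR]
    have hju : matUnit A j j * (matUnit A i j + matUnit A j i) = matUnit A j i := by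
      simp [mul_add, matUnit_mul, hji]
    have huj : (matUnit A i j + matUnit A j i) * matUnit A j j = matUnit A i j := by
      simp [add_mul, matUnit_mul, hij]
    -- S6 : Δ y = e_ji Δ(w) e_ij
    have S6 : Δ (matUnit A j i * x * matUnit A i j) =
        matL A M (matUnit A j i)
          (matR A M (Δ (x + matUnit A j i * x * matUnit A i j)) (matUnit A i j)) := by
      rw [← S5]
      conv_lhs => rw [← S3]
      rw [collapse, hju, huj]
    -- S7 : e_ji Δ(w) e_ij = e_ji Δ(x) e_ij
    have hqe : matUnit A j i * matUnit A i i = matUnit A j i := by simp [matUnit_mul]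
    have hep : matUnit A i i * matUnit A i j = matUnit A i j := by simp [matUnit_mul]
    have S7 : matL A M (matUnit A j i)
        (matR A M (Δ (x + matUnit A j i * x * matUnit A i j)) (matUnit A i j)) =
        matL A M (matUnit A j i) (matR A M (Δ x) (matUnit A i j)) := by
      have h := collapse (matUnit A j i) (matUnit A i i) (matUnit A i i) (matUnit A i j)
        (Δ (x + matUnit A j i * x * matUnit A i j))
      rw [S4, hqe, hep] at h
      exact h.symm
    exact (S6.trans S7).symm
end

section
/- Let A be a unital complex Banach algebra with property (J), M a unital A-bimodule, n ≥ 3, and let Δ be a 2-local derivation from M_n(A) into M_n(M) that vanishes on the linear span of the matrix units {e_{ij}}_{i,j=1}^n. Let Δ_{11} be the restriction of Δ to A_{11} = e_{11} M_n(A) e_{11} (a derivation, identified with a derivation from A into M), and let \bar{Δ_{11}} be its entrywise extension to M_n(A). Then Δ(x) = \bar{Δ_{11}}(x) for every diagonal matrix x ∈ D_n(A), and \bar{Δ_{11}} vanishes on the linear span of the matrix units {e_{ij}}_{i,j=1}^n. -/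
set_option linter.unusedSectionVars false


open MulOpposite Matrix

variable (A M : Type*) [NormedRing A] [NormedAlgebra ℂ A] [CompleteSpace A]
  [AddCommGroup M] [Module ℂ M] [Module A M] [Module Aᵐᵒᵖ M]
  [SMulCommClass A Aᵐᵒᵖ M] [IsScalarTower ℂ A M] [IsScalarTower ℂ Aᵐᵒᵖ M]

variable {n : ℕ}

/-- A Jordan derivation from `A` into the `A`-bimodule `N`: a `ℂ`-linear map with
`D (x²) = D x · x + x · D x`. -/
def IsJordanDerivation (D : A → M) : Prop :=
  IsLinearMap ℂ D ∧ ∀ x : A, D (x * x) = op x • D x + x • D x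

universe u v

/-- Property (J): any Jordan derivation from the algebra `A` into any
`A`-bimodule is a derivation. -/
def PropertyJ (A : Type u) [NormedRing A] [NormedAlgebra ℂ A] [CompleteSpace A] : Prop :=
  ∀ (N : Type v) [AddCommGroup N] [Module ℂ N] [Module A N] [Module Aᵐᵒᵖ N]
    [SMulCommClass A Aᵐᵒᵖ N] [IsScalarTower ℂ A N] [IsScalarTower ℂ Aᵐᵒᵖ N]
    (D : A → N), IsJordanDerivation A N D → IsDerivation A N D

variable {n : ℕ} in
/-- The entrywise extension `δ̄` of the restriction `Δ_{zz}` of `Δ` to the corner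
`A_{zz}`, where `Δ_{zz}` is identified with the map `A → M`,
`a ↦ (Δ (a e_{zz}))_{zz}`; so `δ̄(x)_{ij} = (Δ ((x_{ij}) e_{zz}))_{zz}`. -/
def restrictionBar (Δ : Matrix (Fin n) (Fin n) A → Matrix (Fin n) (Fin n) M)
    (z : Fin n) (x : Matrix (Fin n) (Fin n) A) : Matrix (Fin n) (Fin n) M :=
  Matrix.of fun i j => Δ (Matrix.single z z (x i j)) z z

section Aux

variable {A M}

lemma matL_apply (x : Matrix (Fin n) (Fin n) A) (Y : Matrix (Fin n) (Fin n) M) (i j : Fin n) :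
    matL A M x Y i j = ∑ k, x i k • Y k j := rfl

lemma matR_apply (Y : Matrix (Fin n) (Fin n) M) (x : Matrix (Fin n) (Fin n) A) (i j : Fin n) :
    matR A M Y x i j = ∑ k, op (x k j) • Y i k := rfl

lemma matL_std (p q : Fin n) (a : A) (Y : Matrix (Fin n) (Fin n) M) (l m : Fin n) :
    matL A M (Matrix.single p q a) Y l m = if p = l then a • Y q m else 0 := by
  rw [matL_apply]
  by_cases hp : p = l
  · subst hp
    rw [if_pos rfl, Finset.sum_eq_single q]
    · simp
    · intro k _ hk
      rw [Matrix.single_apply_of_col_ne p p (Ne.symm hk) a, zero_smul]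
    · simp
  · rw [if_neg hp]
    refine Finset.sum_eq_zero fun k _ => ?_
    rw [Matrix.single_apply_of_row_ne hp q k a, zero_smul]

lemma matR_std (p q : Fin n) (a : A) (Y : Matrix (Fin n) (Fin n) M) (l m : Fin n) :
    matR A M Y (Matrix.single p q a) l m = if q = m then op a • Y l p else 0 := by
  rw [matR_apply]
  by_cases hq : q = m
  · subst hq
    rw [if_pos rfl, Finset.sum_eq_single p]
    · simp
    · intro k _ hk
      rw [Matrix.single_apply_of_row_ne (Ne.symm hk) q q a, op_zero, zero_smul]
    · simp
  · rw [if_neg hq]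
    refine Finset.sum_eq_zero fun k _ => ?_
    rw [Matrix.single_apply_of_col_ne p k hq a, op_zero, zero_smul]

lemma matR_addx (Y : Matrix (Fin n) (Fin n) M) (x x' : Matrix (Fin n) (Fin n) A) :
    matR A M Y (x + x') = matR A M Y x + matR A M Y x' := by
  ext i j
  simp [matR_apply, add_smul, Finset.sum_add_distrib]

lemma matL_addx (x x' : Matrix (Fin n) (Fin n) A) (Y : Matrix (Fin n) (Fin n) M) :
    matL A M (x + x') Y = matL A M x Y + matL A M x' Y := by
  ext i j
  simp [matL_apply, add_smul, Finset.sum_add_distrib]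

lemma matL_zeroY (x : Matrix (Fin n) (Fin n) A) :
    matL A M x (0 : Matrix (Fin n) (Fin n) M) = 0 := by
  ext i j
  simp [matL_apply]

lemma matR_zeroY (x : Matrix (Fin n) (Fin n) A) :
    matR A M (0 : Matrix (Fin n) (Fin n) M) x = 0 := by
  ext i j
  simp [matR_apply]

lemma unit_mem (p q : Fin n) : Matrix.single p q (1 : A) ∈ unitSpan A n :=
  Submodule.subset_span ⟨(p, q), rfl⟩

lemma deriv_unit_diag {D : Matrix (Fin n) (Fin n) A → Matrix (Fin n) (Fin n) M}
    (hD : IsMatDerivation A M D) (i : Fin n) :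
    D (Matrix.single i i (1 : A)) i i = 0 := by
  have h := hD.2 (Matrix.single i i (1 : A)) (Matrix.single i i (1 : A))
  rw [Matrix.single_mul_single_same, one_mul] at h
  have h2 := congr_fun (congr_fun h i) i
  rw [Matrix.add_apply, matR_std, matL_std, if_pos rfl, if_pos rfl, op_one, one_smul,
    one_smul] at h2
  exact left_eq_add.mp h2

variable {Δ : Matrix (Fin n) (Fin n) A → Matrix (Fin n) (Fin n) M}

lemma key1 (hΔ : Is2LocalMatDerivation A M Δ) (x : Matrix (Fin n) (Fin n) A)
    (hx : x ∈ diagSet A n) (i : Fin n) :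
    Δ (Matrix.single i i (x i i)) i i = Δ x i i := by
  obtain ⟨D, hD, hDx, hDy⟩ := hΔ x (Matrix.single i i (x i i))
  have hex : ∀ k, (Matrix.single i i (1 : A) * x) i k = x i k := by
    intro k
    rw [Matrix.single_mul_apply_same, one_mul]
  have hmul : Matrix.single i i (1 : A) * x * Matrix.single i i (1 : A)
      = Matrix.single i i (x i i) := by
    ext l m
    by_cases hm : m = i
    · subst hm
      rw [Matrix.mul_single_apply_same, mul_one]
      by_cases hl : l = m
      · subst hl
        rw [hex, Matrix.single_apply_same]
      · rw [Matrix.single_mul_apply_of_ne (h := hl),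
          Matrix.single_apply_of_row_ne (fun h => hl h.symm) m m (x m m)]
    · rw [Matrix.mul_single_apply_of_ne (hbj := hm),
        Matrix.single_apply_of_col_ne i l (fun h => hm h.symm) (x i i)]
  have h1 := hD.2 (Matrix.single i i (1 : A) * x) (Matrix.single i i (1 : A))
  have h0 := hD.2 (Matrix.single i i (1 : A)) x
  rw [hmul] at h1
  have h2 := congr_fun (congr_fun h1 i) i
  rw [← hDy, Matrix.add_apply] at h2
  have hterm1 : matR A M (D (Matrix.single i i (1 : A))) x i i = 0 := by
    rw [matR_apply, Finset.sum_eq_single i]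
    · rw [deriv_unit_diag hD i, smul_zero]
    · intro k _ hk
      rw [hx k i hk, op_zero, zero_smul]
    · simp
  have hterm2 : matL A M (Matrix.single i i (1 : A) * x)
      (D (Matrix.single i i (1 : A))) i i = 0 := by
    rw [matL_apply, Finset.sum_eq_single i]
    · rw [hex, deriv_unit_diag hD i, smul_zero]
    · intro k _ hk
      rw [hex, hx i k (Ne.symm hk), zero_smul]
    · simp
  have hA : matR A M (D (Matrix.single i i (1 : A) * x))
      (Matrix.single i i (1 : A)) i i
      = D (Matrix.single i i (1 : A) * x) i i := by
    rw [matR_std, if_pos rfl, op_one, one_smul]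
  rw [hA, h0, Matrix.add_apply, hterm1, zero_add, hterm2, add_zero] at h2
  rw [h2, matL_std, if_pos rfl, one_smul, ← hDx]

lemma key2 (hΔ : Is2LocalMatDerivation A M Δ) (hvan : ∀ t ∈ unitSpan A n, Δ t = 0)
    (x : Matrix (Fin n) (Fin n) A) (hx : x ∈ diagSet A n) {i j : Fin n} (hij : i ≠ j) :
    Δ x i j = 0 := by
  obtain ⟨D, hD, hDx, hDe⟩ := hΔ x (Matrix.single j j (1 : A))
  have hDe0 : D (Matrix.single j j (1 : A)) = 0 := by
    rw [← hDe]
    exact hvan _ (unit_mem j j)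
  have hcomm : x * Matrix.single j j (1 : A)
      = Matrix.single j j (1 : A) * x := by
    ext l m
    rcases eq_or_ne m j with rfl | hm
    · rcases eq_or_ne l m with rfl | hl
      · rw [Matrix.mul_single_apply_same, mul_one,
          Matrix.single_mul_apply_same, one_mul]
      · rw [Matrix.mul_single_apply_same, mul_one,
          Matrix.single_mul_apply_of_ne (h := hl), hx l m hl]
    · rcases eq_or_ne l j with rfl | hl
      · rw [Matrix.mul_single_apply_of_ne (hbj := hm),
          Matrix.single_mul_apply_same, one_mul, hx l m (Ne.symm hm)]
      · rw [Matrix.mul_single_apply_of_ne (hbj := hm),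
          Matrix.single_mul_apply_of_ne (h := hl)]
  have h1 := hD.2 x (Matrix.single j j (1 : A))
  have h0 := hD.2 (Matrix.single j j (1 : A)) x
  rw [hcomm, h0] at h1
  rw [hDe0, matL_zeroY, add_zero, matR_zeroY, zero_add] at h1
  have h2 := congr_fun (congr_fun h1 i) j
  rw [matR_std, matL_std, if_pos rfl, if_neg (Ne.symm hij), op_one, one_smul] at h2
  rw [hDx, h2]

lemma key3 (hΔ : Is2LocalMatDerivation A M Δ) (hvan : ∀ t ∈ unitSpan A n, Δ t = 0)
    (a : A) (i z : Fin n) :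
    Δ (Matrix.single i i a) i i = Δ (Matrix.single z z a) z z := by
  rcases eq_or_ne i z with rfl | hiz
  · rfl
  have hzi : z ≠ i := hiz.symm
  set u := Matrix.single z i (1 : A) + Matrix.single i z (1 : A) with hu
  set w := Matrix.single i i a + Matrix.single z z a with hw
  have hwdiag : w ∈ diagSet A n := by
    intro l m hlm
    rw [hw, Matrix.add_apply,
      Matrix.single_apply_of_ne (h := fun h => hlm (h.1.symm.trans h.2)),
      Matrix.single_apply_of_ne (h := fun h => hlm (h.1.symm.trans h.2)), add_zero]
  have hstep1 : u * w = Matrix.single z i a + Matrix.single i z a := by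
    rw [hu, hw, add_mul, mul_add, mul_add, Matrix.single_mul_single_same,
      Matrix.single_mul_single_of_ne (h := hiz), Matrix.single_mul_single_of_ne (h := hzi),
      Matrix.single_mul_single_same, one_mul, add_zero, zero_add]
  have hstep2 : (Matrix.single z i a + Matrix.single i z a) * u = w := by
    rw [hu, hw, add_mul, mul_add, mul_add, Matrix.single_mul_single_of_ne (h := hiz),
      Matrix.single_mul_single_same, Matrix.single_mul_single_same,
      Matrix.single_mul_single_of_ne (h := hzi), mul_one, add_zero, zero_add]
    exact add_comm _ _
  have huw : u * w * u = w := by rw [hstep1, hstep2]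
  obtain ⟨D, hD, hDw, hDu⟩ := hΔ w u
  have hDu0 : D u = 0 := by
    rw [← hDu]
    refine hvan u ?_
    rw [hu]
    exact Submodule.add_mem _ (unit_mem z i) (unit_mem i z)
  have h1 := hD.2 (u * w) u
  have h0 := hD.2 u w
  rw [huw, h0, hDu0, matR_zeroY, zero_add, matL_zeroY, add_zero] at h1
  -- h1 : D w = matR (matL u (D w)) u
  have hZ : matL A M u (D w) i z = D w z z := by
    rw [hu, matL_addx, Matrix.add_apply, matL_std, matL_std, if_neg hzi, if_pos rfl,
      one_smul, zero_add]
  have hii := congr_fun (congr_fun h1 i) i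
  rw [hu, matR_addx, Matrix.add_apply, matR_std, matR_std, if_pos rfl, if_neg hzi,
    op_one, one_smul, add_zero, ← hu, hZ] at hii
  -- hii : D w i i = D w z z
  have hwii : w i i = a := by
    rw [hw, Matrix.add_apply, Matrix.single_apply_same,
      Matrix.single_apply_of_row_ne hzi z i a, add_zero]
  have hwzz : w z z = a := by
    rw [hw, Matrix.add_apply, Matrix.single_apply_of_row_ne hiz i z a,
      Matrix.single_apply_same, zero_add]
  have e1 := key1 hΔ w hwdiag i
  have e2 := key1 hΔ w hwdiag z
  rw [hwii] at e1
  rw [hwzz] at e2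
  rw [e1, e2, hDw, hii]

end Aux

/-- if `A` has property (J) and a 2-local derivation
`Δ : Mₙ(A) → Mₙ(M)` (`n ≥ 3`) vanishes on the span of the matrix units, then `Δ`
agrees on the diagonal matrices with the entrywise extension `δ̄ = \bar{Δ_{11}}` of
its restriction `Δ_{11}` to the `(1,1)` corner, and `δ̄` vanishes on the span of
the matrix units. -/
theorem twoLocal_eq_restrictionBar_on_diagonal (hJ : PropertyJ A) (n : ℕ) (hn : 3 ≤ n)
    (Δ : Matrix (Fin n) (Fin n) A → Matrix (Fin n) (Fin n) M)
    (hΔ : Is2LocalMatDerivation A M Δ)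
    (hvan : ∀ t ∈ unitSpan A n, Δ t = 0) :
    (∀ x ∈ diagSet A n, Δ x = restrictionBar A M Δ ⟨0, by omega⟩ x) ∧
    (∀ t ∈ unitSpan A n, restrictionBar A M Δ ⟨0, by omega⟩ t = 0) := by
  constructor
  · intro x hx
    ext i j
    show Δ x i j = Δ (Matrix.single ⟨0, by omega⟩ ⟨0, by omega⟩ (x i j))
      ⟨0, by omega⟩ ⟨0, by omega⟩
    rcases eq_or_ne i j with rfl | hij
    · rw [← key1 hΔ x hx i]
      exact key3 hΔ hvan (x i i) i ⟨0, by omega⟩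
    · rw [key2 hΔ hvan x hx hij, hx i j hij, Matrix.single_zero,
        hvan 0 (Submodule.zero_mem _), Matrix.zero_apply]
  · intro t ht
    have hc : ∀ i j : Fin n, ∃ c : ℂ, t i j = c • (1 : A) := by
      refine Submodule.span_induction (p := fun v _ => ∀ i j : Fin n, ∃ c : ℂ, v i j = c • 1)
        ?_ ?_ ?_ ?_ ht
      · rintro v ⟨⟨p, q⟩, rfl⟩ i j
        by_cases h : p = i ∧ q = j
        · obtain ⟨rfl, rfl⟩ := h
          exact ⟨1, by simp⟩
        · exact ⟨0, by simp [Matrix.single_apply_of_ne (h := h)]⟩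
      · exact fun i j => ⟨0, by rw [Matrix.zero_apply, zero_smul]⟩
      · rintro v v' _ _ hv hv' i j
        obtain ⟨c, hc⟩ := hv i j
        obtain ⟨c', hc'⟩ := hv' i j
        exact ⟨c + c', by rw [Matrix.add_apply, hc, hc', add_smul]⟩
      · rintro r v _ hv i j
        obtain ⟨c, hc⟩ := hv i j
        exact ⟨r * c, by rw [Matrix.smul_apply, hc, smul_smul]⟩
    ext i j
    show Δ (Matrix.single ⟨0, by omega⟩ ⟨0, by omega⟩ (t i j)) ⟨0, by omega⟩
      ⟨0, by omega⟩ = (0 : Matrix (Fin n) (Fin n) M) i j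
    obtain ⟨c, hc'⟩ := hc i j
    rw [hc', ← Matrix.smul_single,
      hvan _ (Submodule.smul_mem _ c (unit_mem ⟨0, by omega⟩ ⟨0, by omega⟩)),
      Matrix.zero_apply, Matrix.zero_apply]
end
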